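/- Let c, D, k > 0 be such that c⁴/(4D²) ≠ c² l(l+1) k² for every natural number l. For l ∈ ℕ define A_l(t) = cosh(tK_l) + (c²/(2DK_l))·sinh(tK_l) if c⁴/(4D²) > c² l(l+1) k² (with K_l = sqrt(c⁴/(4D²) − c² l(l+1)k²)) and A_l(t) = 0 otherwise; define B_l(t) = cos(tK_l') + (c²/(2DK_l'))·sin(tK_l') if c² l(l+1) k² > c⁴/(4D²) (with K_l' = sqrt(c² l(l+1)k² − c⁴/(4D²))) and B_l(t) = 0 otherwise. Let (C_l)_{l≥0} be nonnegative reals with ∑_{l=0}^∞ (2l+1) C_l < ∞, and let (x_l)_{l≥0} be any real sequence with |x_l| ≤ 1 for all l. Then for all t, t' ≥ 0 the series ∑_{l=0}^∞ (2l+1) C_l · x_l · (A_l(t)·A_l(t') + B_l(t)·B_l(t')) converges absolutely. -/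

import Mathlib

open Real

/-- The subcritical frequency parameter `K_l`. -/
noncomputable def Kl (c D k : ℝ) (l : ℕ) : ℝ :=
  Real.sqrt (c^4/(4*D^2) - c^2*(l:ℝ)*((l:ℝ)+1)*k^2)

/-- The supercritical frequency parameter `K_l'`. -/
noncomputable def Kl' (c D k : ℝ) (l : ℕ) : ℝ :=
  Real.sqrt (c^2*(l:ℝ)*((l:ℝ)+1)*k^2 - c^4/(4*D^2))

/-- The subcritical (hyperbolic) amplitude factor `A_l(t)`, vanishing on the
supercritical branch. -/
noncomputable def Afun (c D k : ℝ) (l : ℕ) (t : ℝ) : ℝ :=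
  if c^2*(l:ℝ)*((l:ℝ)+1)*k^2 < c^4/(4*D^2) then
    Real.cosh (t * Kl c D k l) + (c^2/(2*D*Kl c D k l)) * Real.sinh (t * Kl c D k l)
  else 0

/-- The supercritical (oscillatory) amplitude factor `B_l(t)`, vanishing on the
subcritical branch. -/
noncomputable def Bfun (c D k : ℝ) (l : ℕ) (t : ℝ) : ℝ :=
  if c^4/(4*D^2) < c^2*(l:ℝ)*((l:ℝ)+1)*k^2 then
    Real.cos (t * Kl' c D k l) + (c^2/(2*D*Kl' c D k l)) * Real.sin (t * Kl' c D k l)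
  else 0

/-- absolute convergence of the covariance series of the solution of the
spherical hyperbolic diffusion equation (Theorem 2). -/
theorem stmt_17 (c D k : ℝ) (hc : 0 < c) (hD : 0 < D) (hk : 0 < k)
    (hnd : ∀ l : ℕ, c^4/(4*D^2) ≠ c^2*(l:ℝ)*((l:ℝ)+1)*k^2)
    (C : ℕ → ℝ) (hC : ∀ l, 0 ≤ C l)
    (hsum : Summable (fun l : ℕ => (2*(l:ℝ)+1) * C l))
    (x : ℕ → ℝ) (hx : ∀ l, |x l| ≤ 1) :
    ∀ t t' : ℝ, 0 ≤ t → 0 ≤ t' →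
      Summable (fun l : ℕ =>
        |(2*(l:ℝ)+1) * C l * x l *
          (Afun c D k l t * Afun c D k l t' + Bfun c D k l t * Bfun c D k l t')|) := by
  intro t t' ht ht'
  obtain ⟨N, hN⟩ := exists_nat_ge (c^2/(2*D^2*k^2))
  have key : ∀ (l : ℕ), (N:ℝ)+1 ≤ (l:ℝ) →
      c^4/(4*D^2) ≤ c^2*k^2*(l:ℝ)/2 ∧ 1 ≤ (l:ℝ) := by
    intro l hl
    have h1 : c^2/(2*D^2*k^2) ≤ (l:ℝ) := by
      have : (0:ℝ) ≤ (N:ℝ) := Nat.cast_nonneg N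
      linarith
    have h2 : c^2 ≤ 2*D^2*k^2*(l:ℝ) := by
      rw [div_le_iff₀ (by positivity)] at h1; linarith
    constructor
    · rw [div_le_iff₀ (by positivity)]
      nlinarith [mul_le_mul_of_nonneg_left h2 (sq_nonneg c)]
    · have : (0:ℝ) ≤ (N:ℝ) := Nat.cast_nonneg N
      linarith
  have hgtkey : ∀ (l : ℕ), (N:ℝ)+1 ≤ (l:ℝ) →
      c^4/(4*D^2) < c^2*(l:ℝ)*((l:ℝ)+1)*k^2 := by
    intro l hl
    obtain ⟨h3, hl1⟩ := key l hl
    have hpos : 0 < c^2*k^2*(l:ℝ) :=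
      mul_pos (by positivity) (lt_of_lt_of_le one_pos hl1)
    nlinarith [mul_nonneg (by linarith : (0:ℝ) ≤ (l:ℝ)-1) hpos.le]
  have hBbound : ∀ (l : ℕ) (s : ℝ), (N:ℝ)+1 ≤ (l:ℝ) → |Bfun c D k l s| ≤ 2 := by
    intro l s hl
    obtain ⟨h3, hl1⟩ := key l hl
    have hgt := hgtkey l hl
    have hpos : 0 < c^2*k^2*(l:ℝ) :=
      mul_pos (by positivity) (lt_of_lt_of_le one_pos hl1)
    have hKpos : 0 < Kl' c D k l := by
      rw [Kl']; exact Real.sqrt_pos.mpr (by linarith)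
    have hKge : c^2/(2*D) ≤ Kl' c D k l := by
      have heq : Real.sqrt (c^4/(4*D^2)) = c^2/(2*D) := by
        rw [show c^4/(4*D^2) = (c^2/(2*D))^2 by ring]
        exact Real.sqrt_sq (by positivity)
      rw [Kl', ← heq]
      apply Real.sqrt_le_sqrt
      nlinarith [mul_nonneg (by linarith : (0:ℝ) ≤ (l:ℝ)-1) hpos.le]
    have hcoef : c^2/(2*D*Kl' c D k l) ≤ 1 := by
      rw [div_le_one (by positivity)]
      calc c^2 = 2*D*(c^2/(2*D)) := by field_simp
        _ ≤ 2*D*Kl' c D k l := mul_le_mul_of_nonneg_left hKge (by positivity)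
    rw [Bfun, if_pos hgt]
    calc |Real.cos (s * Kl' c D k l) + (c^2/(2*D*Kl' c D k l)) * Real.sin (s * Kl' c D k l)|
        ≤ |Real.cos (s * Kl' c D k l)| + |(c^2/(2*D*Kl' c D k l)) * Real.sin (s * Kl' c D k l)| :=
          abs_add_le _ _
      _ ≤ 1 + 1 := by
          gcongr
          · exact Real.abs_cos_le_one _
          · rw [abs_mul]
            calc |c^2/(2*D*Kl' c D k l)| * |Real.sin (s * Kl' c D k l)|
                ≤ 1 * 1 := by
                  apply mul_le_mul _ (Real.abs_sin_le_one _) (abs_nonneg _) zero_le_one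
                  rw [abs_of_nonneg (by positivity)]; exact hcoef
              _ = 1 := by ring
      _ = 2 := by norm_num
  have hA0 : ∀ (l : ℕ), (N:ℝ)+1 ≤ (l:ℝ) → ∀ s : ℝ, Afun c D k l s = 0 := by
    intro l hl s
    rw [Afun, if_neg (not_lt.mpr (hgtkey l hl).le)]
  apply Summable.of_norm_bounded_eventually_nat (g := fun l => 4 * ((2*(l:ℝ)+1) * C l))
    (hsum.mul_left 4)
  rw [Filter.eventually_atTop]
  refine ⟨N+1, fun l hl => ?_⟩
  have hlN : (N:ℝ)+1 ≤ (l:ℝ) := by exact_mod_cast Nat.cast_le.mpr hl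
  have hA := hA0 l hlN
  have hBt := hBbound l t hlN
  have hBt' := hBbound l t' hlN
  rw [Real.norm_eq_abs, abs_abs, hA t, hA t', abs_mul, abs_mul, abs_mul]
  have h2l : |2*(l:ℝ)+1| = 2*(l:ℝ)+1 := abs_of_nonneg (by positivity)
  have hCl : |C l| = C l := abs_of_nonneg (hC l)
  rw [h2l, hCl]
  have hS : |0*0 + Bfun c D k l t * Bfun c D k l t'| ≤ 4 := by
    rw [zero_mul, zero_add, abs_mul]
    nlinarith [abs_nonneg (Bfun c D k l t), abs_nonneg (Bfun c D k l t')]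
  have hP : 0 ≤ (2*(l:ℝ)+1) * C l := mul_nonneg (by positivity) (hC l)
  calc (2*(l:ℝ)+1) * C l * |x l| * |0*0 + Bfun c D k l t * Bfun c D k l t'|
      = ((2*(l:ℝ)+1) * C l) * (|x l| * |0*0 + Bfun c D k l t * Bfun c D k l t'|) := by ring
    _ ≤ ((2*(l:ℝ)+1) * C l) * (1*4) :=
        mul_le_mul_of_nonneg_left (mul_le_mul (hx l) hS (abs_nonneg _) zero_le_one) hP
    _ = 4 * ((2*(l:ℝ)+1) * C l) := by ring
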